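/- In a cyclic connected component of the state transition graph of a toric trinity, every state is recurrent; that is, for every state in the component there is a non-empty sequence of clockwise moves that starts and ends with that state. Consequently, cyclic components contain no local maxima and no local minima. -/
import Mathlib


/-!  Combinatorial trinities, Tutte matchings (states), and clock moves,
following Hine and Kálmán, "Clock theorems for triangulated surfaces".

A trinity is encoded combinatorially: `Vertex` is the set of vertices, properly
colored by `vcol` with colors `Fin 3` (0 = red, 1 = green, 2 = blue); `White`
and `Black` are the sets of white and black triangles.  Each triangle has one
vertex of each color (`wvert`, `bvert`) and one edge of each color (the edge of
color `c` being opposite the vertex of color `c`); across its edge of color `c`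
a white triangle `w` meets the black triangle `wadj w c`, and a black triangle
`b` meets the white triangle `badj b c`.  The two triangles sharing an edge of
color `c` share their vertices of the other two colors (`bvert_wadj`).
A planar trinity carries a distinguished outer white triangle (`outer = some o`);
for a toric trinity `outer = none`. -/

structure Trinity where
  Vertex : Type
  White : Type
  Black : Type
  [vertexFintype : Fintype Vertex]
  [whiteFintype : Fintype White]
  [blackFintype : Fintype Black]
  [vertexDecEq : DecidableEq Vertex]
  [whiteDecEq : DecidableEq White]
  [blackDecEq : DecidableEq Black]
  outer : Option White
  vcol : Vertex → Fin 3
  wvert : White → Fin 3 → Vertex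
  bvert : Black → Fin 3 → Vertex
  wadj : White → Fin 3 → Black
  badj : Black → Fin 3 → White
  wvert_col : ∀ w c, vcol (wvert w c) = c
  bvert_col : ∀ b c, vcol (bvert b c) = c
  badj_wadj : ∀ w c, badj (wadj w c) c = w
  wadj_badj : ∀ b c, wadj (badj b c) c = b
  bvert_wadj : ∀ w c c', c' ≠ c → bvert (wadj w c) c' = wvert w c'

attribute [instance] Trinity.vertexFintype Trinity.whiteFintype Trinity.blackFintype
  Trinity.vertexDecEq Trinity.whiteDecEq Trinity.blackDecEq

namespace Trinity

variable (T : Trinity)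

/-- `w` is the outer white triangle. -/
def IsOuter (w : T.White) : Prop := T.outer = some w

instance : DecidablePred T.IsOuter := fun w => decidable_of_iff (T.outer = some w) Iff.rfl

/-- `v` is a root, i.e. a vertex of the outer white triangle (planar case). -/
def IsRoot (v : T.Vertex) : Prop := ∃ w, T.IsOuter w ∧ ∃ c, v = T.wvert w c

/-- A Tutte matching (state): a perfect matching between the non-outer white
triangles and incident non-root vertices.  (For a toric trinity, `IsOuter` and
`IsRoot` are empty conditions, so this is a perfect matching between all white
triangles and all vertices.)  The value on the outer white triangle, if any, is
irrelevant and is normalized by `outer_spec`. -/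
structure State where
  toFun : T.White → T.Vertex
  incident : ∀ w, ∃ c, toFun w = T.wvert w c
  injOn : ∀ w w', ¬ T.IsOuter w → ¬ T.IsOuter w' → toFun w = toFun w' → w = w'
  not_root : ∀ w, ¬ T.IsOuter w → ¬ T.IsRoot (toFun w)
  surj : ∀ v, ¬ T.IsRoot v → ∃ w, ¬ T.IsOuter w ∧ toFun w = v
  outer_spec : ∀ w, T.IsOuter w → toFun w = T.wvert w 0

namespace State

variable {T}

/-- The black triangle through which the arrow representing the match of the
white triangle `w` passes: the arrow of the match `(w, s w)` crosses the edge
of `w` opposite the matched vertex `s w` (the edge of color `vcol (s w)`). -/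
def arrowBlack (s : T.State) (w : T.White) : T.Black := T.wadj w (T.vcol (s.toFun w))

/-- The black triangle `b` is empty in the state `s`: no arrow passes through it. -/
def EmptyAt (s : T.State) (b : T.Black) : Prop :=
  ∀ w, ¬ T.IsOuter w → s.arrowBlack w ≠ b

/-- `b` is a clockwise empty black triangle of `s`:  it is empty and its three
vertices are matched with the three adjacent white triangles in the clockwise
rotational pattern. -/
def IsCW (s : T.State) (b : T.Black) : Prop :=
  s.EmptyAt b ∧ ∀ c, s.toFun (T.badj b c) = T.bvert b (c + 1)

/-- `b` is a counter-clockwise empty black triangle of `s`. -/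
def IsCCW (s : T.State) (b : T.Black) : Prop :=
  s.EmptyAt b ∧ ∀ c, s.toFun (T.badj b c) = T.bvert b (c + 2)

end State

/-- The basic clockwise move (clock move) about the empty black triangle `b`,
turning it from clockwise to counter-clockwise: `t` is obtained from `s` by
changing `b`. -/
def CWMoveAt (s t : T.State) (b : T.Black) : Prop :=
  s.IsCW b ∧ (∀ c, t.toFun (T.badj b c) = T.bvert b (c + 2)) ∧
    ∀ w, (∀ c, w ≠ T.badj b c) → t.toFun w = s.toFun w

/-- A walk in the state transition graph, recording for each step the black
triangle about which the move is performed and the direction of the move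
(`true` = clockwise, `false` = counter-clockwise). -/
inductive Walk : T.State → List (T.Black × Bool) → T.State → Prop
  | nil (s : T.State) : Walk s [] s
  | cw {s t u : T.State} {b : T.Black} {l : List (T.Black × Bool)} :
      T.CWMoveAt s t b → Walk t l u → Walk s ((b, true) :: l) u
  | ccw {s t u : T.State} {b : T.Black} {l : List (T.Black × Bool)} :
      T.CWMoveAt t s b → Walk t l u → Walk s ((b, false) :: l) u

/-- Two states lie in the same connected component of the state transition
graph. -/
def Reaches (s t : T.State) : Prop := ∃ l, T.Walk s l t

/-- A walk consisting of clockwise moves only, about the listed black triangles. -/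
def CWWalk (s : T.State) (l : List T.Black) (t : T.State) : Prop :=
  T.Walk s (l.map fun b => (b, true)) t

/-- A state is recurrent if some non-empty sequence of clockwise moves starts
and ends at it. -/
def Recurrent (s : T.State) : Prop := ∃ l : List T.Black, l ≠ [] ∧ T.CWWalk s l s

/-- `s` belongs to an acyclic component of the state transition graph: no state
in its component is recurrent. -/
def InAcyclic (s : T.State) : Prop := ∀ t, T.Reaches s t → ¬ T.Recurrent t

/-- Two white triangles sharing an adjacent black triangle. -/
def WAdj (w w' : T.White) : Prop := ∃ c c', T.wadj w c = T.wadj w' c'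

/-- Rotation (by one step, in the direction induced by the orientation) of the
white triangles around the vertex `v`. -/
def rotAt (v : T.Vertex) (w : T.White) : T.White :=
  T.badj (T.wadj w (T.vcol v + 1)) (T.vcol v + 2)

/-- The combinatorial data encode a closed connected oriented surface: the
triangles form a connected complex and the link of every vertex is a single
cycle of triangles. -/
def Surface : Prop :=
  (∀ w w' : T.White, Relation.ReflTransGen T.WAdj w w') ∧
  ∀ (v : T.Vertex) (w w' : T.White), T.wvert w (T.vcol v) = v → T.wvert w' (T.vcol v) = v →
    ∃ k : ℕ, (T.rotAt v)^[k] w = w'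

/-- A planar trinity: a trinity on the sphere (Euler characteristic 2) with a
distinguished outer white triangle. -/
def Planar : Prop :=
  T.Surface ∧ T.outer.isSome ∧ Fintype.card T.Vertex = Fintype.card T.White + 2

/-- A toric trinity: a trinity on the torus (Euler characteristic 0), with all
triangles and vertices taking part in matchings. -/
def Toric : Prop :=
  T.Surface ∧ T.outer = none ∧ Fintype.card T.Vertex = Fintype.card T.White

/-- The configuration of a general clock move: three white triangles `W 0, W 1,
W 2` and three vertices `u 0, u 1, u 2` (one of each color) such that `W c`
contains the vertices `u c'` for both colors `c' ≠ c`; the three edges of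
colors `c` of the triangles `W c` then form a closed triangle of edges through
the vertices `u`, bounding a disk on the side opposite to the whites.
(For the boundary of a black triangle `b` this recovers `W = T.badj b`,
`u = T.bvert b`.) -/
def CombConfig (W : Fin 3 → T.White) (u : Fin 3 → T.Vertex) : Prop :=
  ∀ c c' : Fin 3, c' ≠ c → T.wvert (W c) c' = u c'

/-- A general clockwise move from `s` to `t`: about some clock-move
configuration whose three (non-outer) white triangles are matched with its
three vertices, the matching is switched from the clockwise pattern to the
counter-clockwise one, all other matches being kept. -/
def CWMove (s t : T.State) : Prop :=
  ∃ (W : Fin 3 → T.White) (u : Fin 3 → T.Vertex),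
    T.CombConfig W u ∧ (∀ c, ¬ T.IsOuter (W c)) ∧
    (∀ c, s.toFun (W c) = u (c + 1)) ∧ (∀ c, t.toFun (W c) = u (c + 2)) ∧
    ∀ w, (∀ c, w ≠ W c) → t.toFun w = s.toFun w

/-- `P` exhibits the closed triangle of edges determined by the clock-move
configuration `W` as separating: `P` is a two-coloring of the triangles which
changes value exactly across the three edges of the configuration, the white
triangles `W c` being on the `P`-side. -/
def ConfigCut (W : Fin 3 → T.White) (P : T.White ⊕ T.Black → Prop) : Prop :=
  (∀ (w : T.White) (c : Fin 3), (∀ c₀, ¬ (w = W c₀ ∧ c = c₀)) →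
    (P (Sum.inl w) ↔ P (Sum.inr (T.wadj w c)))) ∧
  (∀ c, P (Sum.inl (W c))) ∧ (∀ c, ¬ P (Sum.inr (T.wadj (W c) c)))

/-- A trinity is irreducible if it is not the trinity `F` with a single black
and a single white triangle, and it is not a nontrivial connected sum; i.e.
every separating closed triangle of edges cuts off a single triangle. -/
def Irreducible : Prop :=
  1 < Fintype.card T.White ∧
  ∀ (W : Fin 3 → T.White) (u : Fin 3 → T.Vertex) (P : T.White ⊕ T.Black → Prop),
    T.CombConfig W u → T.ConfigCut W P →
      (∃ b : T.Black, ∀ x, ¬ P x ↔ x = Sum.inr b) ∨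
      (∃ w : T.White, ∀ x, P x ↔ x = Sum.inl w)

/-! ### The directed dual graphs `G_X^*`

For a color `X`, the vertices of the directed graph `G_X^*` are the vertices of
the trinity of color `X` and its directed edges are in natural bijection with
the white triangles: the white triangle `w` corresponds to the dual edge of its
edge of color `X`, directed from the vertex of color `X` of the adjacent black
triangle `wadj w X` (its tail) to the vertex of color `X` of `w` (its head).
The arrows of a state pointing to vertices of color `X` are edges of `G_X^*`. -/

/-- The head of the edge of `G_X^*` corresponding to the white triangle `w`. -/
def head (X : Fin 3) (w : T.White) : T.Vertex := T.wvert w X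

/-- The tail of the edge of `G_X^*` corresponding to the white triangle `w`. -/
def tail (X : Fin 3) (w : T.White) : T.Vertex := T.bvert (T.wadj w X) X

/-- One-step reachability in `G_X^*` along edges from the set `A`. -/
def ARel (X : Fin 3) (A : Finset T.White) (a b : T.Vertex) : Prop :=
  ∃ w ∈ A, T.tail X w = a ∧ T.head X w = b

/-- `A` is a spanning arborescence of `G_X^*`, rooted at the root of color `X`
(the vertex of color `X` of the outer triangle `o`): a spanning tree all of
whose edges point away from the root. -/
def IsArborescence (X : Fin 3) (o : T.White) (A : Finset T.White) : Prop :=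
  (∀ w ∈ A, T.head X w ≠ T.wvert o X) ∧
  (∀ v : T.Vertex, T.vcol v = X → v ≠ T.wvert o X → ∃! w, w ∈ A ∧ T.head X w = v) ∧
  (∀ v : T.Vertex, T.vcol v = X → Relation.ReflTransGen (T.ARel X A) (T.wvert o X) v)

/-- One step of the tour tracing (counter-clockwise) the boundary of a small
neighborhood of the spanning tree `A` in `G_X^*`.  A position of the tour is a
dart `(w, d)`: the edge `w` of `G_X^*` together with a direction (`true`:
towards the head, `false`: towards the tail).  From the end of the dart one
rotates to the next edge-end around the vertex; if that edge belongs to `A` it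
is traversed away from the vertex, and otherwise its end is crossed (recorded
by bouncing back towards the vertex). -/
def tourStep (X : Fin 3) (A : Finset T.White) : T.White × Bool → T.White × Bool :=
  fun p =>
    if p.2 then
      let w' := T.badj (T.wadj p.1 (X + 1)) X
      (w', decide (w' ∈ A))
    else
      let w' := T.badj (T.wadj p.1 X) (X + 2)
      (w', decide (w' ∉ A))

/-- The position of the edge `w` of `G_X^*` in the ordering `<_A` determined by
the spanning arborescence `A`: the first time the boundary tour of a
neighborhood of `A` (started on the outer white triangle `o`, i.e. at the dart
arriving at the root through `o`) travels along `w` (if `w ∈ A`) or crosses an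
end of `w` (if `w ∉ A`). -/
noncomputable def ordIdx (X : Fin 3) (o : T.White) (A : Finset T.White) (w : T.White) : ℕ :=
  sInf {k : ℕ | ((T.tourStep X A)^[k] (o, true)).1 = w}

/-- `A` is the clocked arborescence of `G_X^*`: the spanning arborescence such
that for every non-root vertex `y` of color `X`, the edge of `A` pointing to
`y` is smallest, with respect to the ordering `<_A`, among all edges of
`G_X^*` terminating at `y`. -/
def IsClocked (X : Fin 3) (o : T.White) (A : Finset T.White) : Prop :=
  T.IsArborescence X o A ∧
    ∀ w ∈ A, ∀ w' : T.White, w' ≠ w → T.head X w' = T.head X w →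
      T.ordIdx X o A w < T.ordIdx X o A w'

/-! ### Wreaths (toric trinities) -/

/-- A nonempty set `C` of edges of `G_R^*` forming a single (directed) cycle:
at every red vertex the in-degree and out-degree in `C` agree and are at most
one, and `C` is connected. -/
def IsDirCycle (C : Finset T.White) : Prop :=
  C.Nonempty ∧
  (∀ v : T.Vertex, T.vcol v = 0 →
    (C.filter fun w => T.head 0 w = v).card = (C.filter fun w => T.tail 0 w = v).card ∧
    (C.filter fun w => T.head 0 w = v).card ≤ 1) ∧
  ∀ w ∈ C, ∀ w' ∈ C,
    Relation.ReflTransGen (fun a b => a ∈ C ∧ b ∈ C ∧ T.head 0 a = T.tail 0 b) w w'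

/-- The cycle `C` of edges of `G_R^*` separates the surface: the faces of
`G_R^*` (which correspond to the green and blue vertices of the trinity) can be
two-colored so that the two faces adjacent along an edge of `G_R^*` (namely the
faces of the green and the blue endpoint of the crossed red edge) get the same
color exactly when the edge does not belong to `C`. -/
def SeparatingSet (C : Finset T.White) : Prop :=
  ∃ P : T.Vertex → Prop,
    (∀ w : T.White, w ∉ C → (P (T.wvert w 1) ↔ P (T.wvert w 2))) ∧
    ∀ w ∈ C, ¬ (P (T.wvert w 1) ↔ P (T.wvert w 2))

/-- A wreath: a set `W` of edges of the directed dual graph `G_R^*` such that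
every red vertex has exactly one edge of `W` pointing to it and the edges of
`W` form no separating cycle. -/
def IsWreath (W : Finset T.White) : Prop :=
  (∀ v : T.Vertex, T.vcol v = 0 → ∃! w, w ∈ W ∧ T.head 0 w = v) ∧
  ∀ C ⊆ W, T.IsDirCycle C → ¬ T.SeparatingSet C


variable {T : Trinity}

theorem State.ext' {s t : T.State} (h : s.toFun = t.toFun) : s = t := by
  cases s; cases t; cases h; rfl

lemma fin3_add_one_ne (c : Fin 3) : c + 1 ≠ c := by revert c; decide

lemma fin3_add_two_ne (c : Fin 3) : c + 2 ≠ c := by revert c; decide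

lemma not_isOuter (hT : T.outer = none) (w : T.White) : ¬ T.IsOuter w := by
  simp [Trinity.IsOuter, hT]

lemma not_isRoot (hT : T.outer = none) (v : T.Vertex) : ¬ T.IsRoot v := by
  rintro ⟨w, hw, -⟩; exact not_isOuter hT w hw

lemma state_inj (hT : T.outer = none) (s : T.State) : Function.Injective s.toFun :=
  fun w w' h => s.injOn w w' (not_isOuter hT w) (not_isOuter hT w') h

lemma bvert_eq_wvert_badj (b : T.Black) (c c' : Fin 3) (h : c' ≠ c) :
    T.bvert b c' = T.wvert (T.badj b c) c' := by
  have := T.bvert_wadj (T.badj b c) c c' h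
  rw [T.wadj_badj] at this
  exact this

lemma eq_badj_of_wadj_eq {w : T.White} {k : Fin 3} {b' : T.Black}
    (h : T.wadj w k = b') : T.badj b' k = w := by
  rw [← h, T.badj_wadj]

/-- Exchanging matched vertices cyclically among three white triangles yields a state. -/
lemma exists_cycle_state (hT : T.outer = none) (s : T.State) (w0 w1 w2 : T.White)
    (h01 : w0 ≠ w1) (h02 : w0 ≠ w2) (h12 : w1 ≠ w2)
    (hi0 : ∃ c, s.toFun w1 = T.wvert w0 c)
    (hi1 : ∃ c, s.toFun w2 = T.wvert w1 c)
    (hi2 : ∃ c, s.toFun w0 = T.wvert w2 c) :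
    ∃ t : T.State, t.toFun w0 = s.toFun w1 ∧ t.toFun w1 = s.toFun w2 ∧
      t.toFun w2 = s.toFun w0 ∧ ∀ w, w ≠ w0 → w ≠ w1 → w ≠ w2 → t.toFun w = s.toFun w := by
  classical
  set e : T.White ≃ T.White := (Equiv.swap w0 w1).trans (Equiv.swap w0 w2) with he
  have e0 : e w0 = w1 := by
    simp only [he, Equiv.trans_apply, Equiv.swap_apply_left]
    exact Equiv.swap_apply_of_ne_of_ne h01.symm h12
  have e1 : e w1 = w2 := by
    simp only [he, Equiv.trans_apply, Equiv.swap_apply_right, Equiv.swap_apply_left]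
  have e2 : e w2 = w0 := by
    simp only [he, Equiv.trans_apply]
    rw [Equiv.swap_apply_of_ne_of_ne h02.symm h12.symm, Equiv.swap_apply_right]
  have eo : ∀ w, w ≠ w0 → w ≠ w1 → w ≠ w2 → e w = w := by
    intro w a0 a1 a2
    simp only [he, Equiv.trans_apply]
    rw [Equiv.swap_apply_of_ne_of_ne a0 a1, Equiv.swap_apply_of_ne_of_ne a0 a2]
  refine ⟨{ toFun := fun w => s.toFun (e w)
            incident := ?_
            injOn := fun w w' _ _ h => e.injective (state_inj hT s h)
            not_root := fun w _ => not_isRoot hT _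
            surj := ?_
            outer_spec := fun w hw => absurd hw (not_isOuter hT w) },
          by simpa using congrArg s.toFun e0,
          by simpa using congrArg s.toFun e1,
          by simpa using congrArg s.toFun e2,
          fun w a0 a1 a2 => by simpa using congrArg s.toFun (eo w a0 a1 a2)⟩
  · intro w
    show ∃ c, s.toFun (e w) = T.wvert w c
    by_cases c0 : w = w0
    · subst c0; rw [e0]; exact hi0
    by_cases c1 : w = w1
    · subst c1; rw [e1]; exact hi1
    by_cases c2 : w = w2
    · subst c2; rw [e2]; exact hi2
    · rw [eo w c0 c1 c2]; exact s.incident w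
  · intro v _
    obtain ⟨w, -, hw⟩ := s.surj v (not_isRoot hT v)
    exact ⟨e.symm w, not_isOuter hT _, by simp [hw]⟩

/-- With a rotational pattern at `b`, the three adjacent whites are distinct. -/
lemma badj_distinct (s : T.State) (b : T.Black) (d : Fin 3)
    (h : ∀ c, s.toFun (T.badj b c) = T.bvert b (c + d)) {c c' : Fin 3}
    (hcc : T.badj b c = T.badj b c') : c = c' := by
  have h1 : T.bvert b (c + d) = T.bvert b (c' + d) := by rw [← h c, ← h c', hcc]
  have h2 := congrArg T.vcol h1
  rw [T.bvert_col, T.bvert_col] at h2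
  exact add_right_cancel h2

lemma exists_fire (hT : T.outer = none) (s : T.State) (b : T.Black)
    (h : ∀ c, s.toFun (T.badj b c) = T.bvert b (c + 1)) :
    ∃ t : T.State, (∀ c, t.toFun (T.badj b c) = T.bvert b (c + 2)) ∧
      ∀ w, (∀ c, w ≠ T.badj b c) → t.toFun w = s.toFun w := by
  have hd : ∀ {c c' : Fin 3}, T.badj b c = T.badj b c' → c = c' := badj_distinct s b 1 h
  have d01 : T.badj b 0 ≠ T.badj b 1 := fun hh => by have := hd hh; exact absurd this (by decide)
  have d02 : T.badj b 0 ≠ T.badj b 2 := fun hh => by have := hd hh; exact absurd this (by decide)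
  have d12 : T.badj b 1 ≠ T.badj b 2 := fun hh => by have := hd hh; exact absurd this (by decide)
  obtain ⟨t, t0, t1, t2, toff⟩ := exists_cycle_state hT s (T.badj b 0) (T.badj b 1) (T.badj b 2)
    d01 d02 d12
    ⟨2, by rw [h 1, show ((1:Fin 3) + 1) = 2 by decide]; exact bvert_eq_wvert_badj b 0 2 (by decide)⟩
    ⟨0, by rw [h 2, show ((2:Fin 3) + 1) = 0 by decide]; exact bvert_eq_wvert_badj b 1 0 (by decide)⟩
    ⟨1, by rw [h 0, show ((0:Fin 3) + 1) = 1 by decide]; exact bvert_eq_wvert_badj b 2 1 (by decide)⟩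
  refine ⟨t, ?_, fun w hw => toff w (hw 0) (hw 1) (hw 2)⟩
  intro c
  fin_cases c
  · show t.toFun (T.badj b 0) = T.bvert b (0 + 2)
    rw [t0, h 1]; exact congrArg (T.bvert b) (by decide)
  · show t.toFun (T.badj b 1) = T.bvert b (1 + 2)
    rw [t1, h 2]; exact congrArg (T.bvert b) (by decide)
  · show t.toFun (T.badj b 2) = T.bvert b (2 + 2)
    rw [t2, h 0]; exact congrArg (T.bvert b) (by decide)

lemma exists_unfire (hT : T.outer = none) (s : T.State) (b : T.Black)
    (h : ∀ c, s.toFun (T.badj b c) = T.bvert b (c + 2)) :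
    ∃ t : T.State, (∀ c, t.toFun (T.badj b c) = T.bvert b (c + 1)) ∧
      ∀ w, (∀ c, w ≠ T.badj b c) → t.toFun w = s.toFun w := by
  have hd : ∀ {c c' : Fin 3}, T.badj b c = T.badj b c' → c = c' := badj_distinct s b 2 h
  have d01 : T.badj b 0 ≠ T.badj b 2 := fun hh => by have := hd hh; exact absurd this (by decide)
  have d02 : T.badj b 0 ≠ T.badj b 1 := fun hh => by have := hd hh; exact absurd this (by decide)
  have d12 : T.badj b 2 ≠ T.badj b 1 := fun hh => by have := hd hh; exact absurd this (by decide)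
  obtain ⟨t, t0, t1, t2, toff⟩ := exists_cycle_state hT s (T.badj b 0) (T.badj b 2) (T.badj b 1)
    d01 d02 d12
    ⟨1, by rw [h 2, show ((2:Fin 3) + 2) = 1 by decide]; exact bvert_eq_wvert_badj b 0 1 (by decide)⟩
    ⟨0, by rw [h 1, show ((1:Fin 3) + 2) = 0 by decide]; exact bvert_eq_wvert_badj b 2 0 (by decide)⟩
    ⟨2, by rw [h 0, show ((0:Fin 3) + 2) = 2 by decide]; exact bvert_eq_wvert_badj b 1 2 (by decide)⟩
  refine ⟨t, ?_, fun w hw => toff w (hw 0) (hw 2) (hw 1)⟩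
  intro c
  fin_cases c
  · show t.toFun (T.badj b 0) = T.bvert b (0 + 1)
    rw [t0, h 2]; exact congrArg (T.bvert b) (by decide)
  · show t.toFun (T.badj b 1) = T.bvert b (1 + 1)
    rw [t2, h 0]; exact congrArg (T.bvert b) (by decide)
  · show t.toFun (T.badj b 2) = T.bvert b (2 + 1)
    rw [t1, h 1]; exact congrArg (T.bvert b) (by decide)

lemma cw_exists_move (hT : T.outer = none) {s : T.State} {b : T.Black} (h : s.IsCW b) :
    ∃ t, T.CWMoveAt s t b := by
  obtain ⟨t, ht1, ht2⟩ := exists_fire hT s b h.2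
  exact ⟨t, h, ht1, ht2⟩

lemma move_isCCW (hT : T.outer = none) {s t : T.State} {b : T.Black}
    (m : T.CWMoveAt s t b) : t.IsCCW b := by
  classical
  refine ⟨?_, m.2.1⟩
  intro w _ hcontra
  by_cases hc : ∃ c, w = T.badj b c
  · obtain ⟨c, rfl⟩ := hc
    have hv : t.toFun (T.badj b c) = T.bvert b (c + 2) := m.2.1 c
    have ha : State.arrowBlack t (T.badj b c) = T.wadj (T.badj b c) (c + 2) := by
      unfold State.arrowBlack; rw [hv, T.bvert_col]
    rw [ha] at hcontra
    have := eq_badj_of_wadj_eq hcontra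
    have h2 : (c : Fin 3) + 2 = c := badj_distinct t b 2 m.2.1 this
    exact absurd h2 (fin3_add_two_ne c)
  · push_neg at hc
    have hv : t.toFun w = s.toFun w := m.2.2 w (fun c => hc c)
    have : State.arrowBlack t w = State.arrowBlack s w := by
      unfold State.arrowBlack; rw [hv]
    rw [this] at hcontra
    exact m.1.1 w (not_isOuter hT w) hcontra

lemma ccw_exists_move (hT : T.outer = none) {t : T.State} {b : T.Black} (h : t.IsCCW b) :
    ∃ s, T.CWMoveAt s t b := by
  classical
  obtain ⟨s, hs1, hs2⟩ := exists_unfire hT t b h.2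
  refine ⟨s, ⟨?_, hs1⟩, h.2, fun w hw => (hs2 w hw).symm⟩
  intro w _ hcontra
  by_cases hc : ∃ c, w = T.badj b c
  · obtain ⟨c, rfl⟩ := hc
    have ha : State.arrowBlack s (T.badj b c) = T.wadj (T.badj b c) (c + 1) := by
      unfold State.arrowBlack; rw [hs1 c, T.bvert_col]
    rw [ha] at hcontra
    have := eq_badj_of_wadj_eq hcontra
    have h2 : (c : Fin 3) + 1 = c := badj_distinct s b 1 hs1 this
    exact absurd h2 (fin3_add_one_ne c)
  · push_neg at hc
    have hv : s.toFun w = t.toFun w := hs2 w (fun c => hc c)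
    have : State.arrowBlack s w = State.arrowBlack t w := by
      unfold State.arrowBlack; rw [hv]
    rw [this] at hcontra
    exact h.1 w (not_isOuter hT w) hcontra

lemma move_det {s t t' : T.State} {b : T.Black}
    (m : T.CWMoveAt s t b) (m' : T.CWMoveAt s t' b) : t = t' := by
  classical
  apply State.ext'
  funext w
  by_cases hc : ∃ c, w = T.badj b c
  · obtain ⟨c, rfl⟩ := hc; rw [m.2.1 c, m'.2.1 c]
  · push_neg at hc; rw [m.2.2 w (fun c => hc c), m'.2.2 w (fun c => hc c)]

lemma move_det_rev {s s' t : T.State} {b : T.Black}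
    (m : T.CWMoveAt s t b) (m' : T.CWMoveAt s' t b) : s = s' := by
  classical
  apply State.ext'
  funext w
  by_cases hc : ∃ c, w = T.badj b c
  · obtain ⟨c, rfl⟩ := hc; rw [m.1.2 c, m'.1.2 c]
  · push_neg at hc; rw [← m.2.2 w (fun c => hc c), ← m'.2.2 w (fun c => hc c)]

lemma cw_disjoint {s : T.State} {b₁ b₂ : T.Black}
    (h₁ : s.IsCW b₁) (h₂ : s.IsCW b₂) (hne : b₁ ≠ b₂) :
    ∀ c c', T.badj b₁ c ≠ T.badj b₂ c' := by
  intro c c' he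
  have hv : T.bvert b₁ (c + 1) = T.bvert b₂ (c' + 1) := by
    rw [← h₁.2 c, ← h₂.2 c', he]
  have hcol := congrArg T.vcol hv
  rw [T.bvert_col, T.bvert_col] at hcol
  have hcc : c = c' := add_right_cancel hcol
  subst hcc
  exact hne (by rw [← T.wadj_badj b₁ c, ← T.wadj_badj b₂ c, he])

lemma ccw_disjoint {s : T.State} {b₁ b₂ : T.Black}
    (h₁ : s.IsCCW b₁) (h₂ : s.IsCCW b₂) (hne : b₁ ≠ b₂) :
    ∀ c c', T.badj b₁ c ≠ T.badj b₂ c' := by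
  intro c c' he
  have hv : T.bvert b₁ (c + 2) = T.bvert b₂ (c' + 2) := by
    rw [← h₁.2 c, ← h₂.2 c', he]
  have hcol := congrArg T.vcol hv
  rw [T.bvert_col, T.bvert_col] at hcol
  have hcc : c = c' := add_right_cancel hcol
  subst hcc
  exact hne (by rw [← T.wadj_badj b₁ c, ← T.wadj_badj b₂ c, he])

lemma diamond_fwd (hT : T.outer = none) {s t₁ t₂ : T.State} {b₁ b₂ : T.Black}
    (m₁ : T.CWMoveAt s t₁ b₁) (m₂ : T.CWMoveAt s t₂ b₂) (hne : b₁ ≠ b₂) :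
    ∃ u, T.CWMoveAt t₁ u b₂ ∧ T.CWMoveAt t₂ u b₁ := by
  classical
  have hd := cw_disjoint m₁.1 m₂.1 hne
  -- t₁ is CW at b₂
  have hp₁ : ∀ c, t₁.toFun (T.badj b₂ c) = T.bvert b₂ (c + 1) := by
    intro c
    rw [m₁.2.2 _ (fun c' => (hd c' c).symm), m₂.1.2 c]
  have hcw₁ : t₁.IsCW b₂ := by
    refine ⟨?_, hp₁⟩
    intro w _ hcontra
    by_cases hc : ∃ c, w = T.badj b₁ c
    · obtain ⟨c, rfl⟩ := hc
      have ha : State.arrowBlack t₁ (T.badj b₁ c) = T.wadj (T.badj b₁ c) (c + 2) := by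
        unfold State.arrowBlack; rw [m₁.2.1 c, T.bvert_col]
      rw [ha] at hcontra
      exact hd c (c + 2) (eq_badj_of_wadj_eq hcontra).symm
    · push_neg at hc
      have hv : t₁.toFun w = s.toFun w := m₁.2.2 w (fun c => hc c)
      have ha : State.arrowBlack t₁ w = State.arrowBlack s w := by
        unfold State.arrowBlack; rw [hv]
      rw [ha] at hcontra
      exact m₂.1.1 w (not_isOuter hT w) hcontra
  obtain ⟨u, hu⟩ := cw_exists_move hT hcw₁
  refine ⟨u, hu, ?_⟩
  -- t₂ is CW at b₁
  have hp₂ : ∀ c, t₂.toFun (T.badj b₁ c) = T.bvert b₁ (c + 1) := by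
    intro c
    rw [m₂.2.2 _ (fun c' => hd c c'), m₁.1.2 c]
  have hcw₂ : t₂.IsCW b₁ := by
    refine ⟨?_, hp₂⟩
    intro w _ hcontra
    by_cases hc : ∃ c, w = T.badj b₂ c
    · obtain ⟨c, rfl⟩ := hc
      have ha : State.arrowBlack t₂ (T.badj b₂ c) = T.wadj (T.badj b₂ c) (c + 2) := by
        unfold State.arrowBlack; rw [m₂.2.1 c, T.bvert_col]
      rw [ha] at hcontra
      exact hd (c + 2) c (eq_badj_of_wadj_eq hcontra)
    · push_neg at hc
      have hv : t₂.toFun w = s.toFun w := m₂.2.2 w (fun c => hc c)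
      have ha : State.arrowBlack t₂ w = State.arrowBlack s w := by
        unfold State.arrowBlack; rw [hv]
      rw [ha] at hcontra
      exact m₁.1.1 w (not_isOuter hT w) hcontra
  refine ⟨hcw₂, ?_, ?_⟩
  · intro c
    rw [hu.2.2 _ (fun c' => hd c c'), m₁.2.1 c]
  · intro w hw
    by_cases hc : ∃ c, w = T.badj b₂ c
    · obtain ⟨c, rfl⟩ := hc
      rw [hu.2.1 c, m₂.2.1 c]
    · push_neg at hc
      rw [hu.2.2 w (fun c => hc c), m₁.2.2 w hw, m₂.2.2 w (fun c => hc c)]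

lemma diamond_bwd (hT : T.outer = none) {t₁ t₂ u : T.State} {b₁ b₂ : T.Black}
    (m₁ : T.CWMoveAt t₁ u b₁) (m₂ : T.CWMoveAt t₂ u b₂) (hne : b₁ ≠ b₂) :
    ∃ s, T.CWMoveAt s t₁ b₂ ∧ T.CWMoveAt s t₂ b₁ := by
  classical
  have hc₁ := move_isCCW hT m₁
  have hc₂ := move_isCCW hT m₂
  have hd := ccw_disjoint hc₁ hc₂ hne
  -- t₁ is CCW at b₂
  have hp₁ : ∀ c, t₁.toFun (T.badj b₂ c) = T.bvert b₂ (c + 2) := by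
    intro c
    rw [← m₁.2.2 _ (fun c' => (hd c' c).symm), hc₂.2 c]
  have hccw₁ : t₁.IsCCW b₂ := by
    refine ⟨?_, hp₁⟩
    intro w _ hcontra
    by_cases hc : ∃ c, w = T.badj b₁ c
    · obtain ⟨c, rfl⟩ := hc
      have ha : State.arrowBlack t₁ (T.badj b₁ c) = T.wadj (T.badj b₁ c) (c + 1) := by
        unfold State.arrowBlack; rw [m₁.1.2 c, T.bvert_col]
      rw [ha] at hcontra
      exact hd c (c + 1) (eq_badj_of_wadj_eq hcontra).symm
    · push_neg at hc
      have hv : t₁.toFun w = u.toFun w := (m₁.2.2 w (fun c => hc c)).symm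
      have ha : State.arrowBlack t₁ w = State.arrowBlack u w := by
        unfold State.arrowBlack; rw [hv]
      rw [ha] at hcontra
      exact hc₂.1 w (not_isOuter hT w) hcontra
  obtain ⟨s, hs⟩ := ccw_exists_move hT hccw₁
  refine ⟨s, hs, ?_⟩
  -- s is CW at b₁
  have hp : ∀ c, s.toFun (T.badj b₁ c) = T.bvert b₁ (c + 1) := by
    intro c
    rw [← hs.2.2 _ (fun c' => hd c c'), m₁.1.2 c]
  have hcw : s.IsCW b₁ := by
    refine ⟨?_, hp⟩
    intro w _ hcontra
    by_cases hc : ∃ c, w = T.badj b₁ c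
    · obtain ⟨c, rfl⟩ := hc
      have ha : State.arrowBlack s (T.badj b₁ c) = T.wadj (T.badj b₁ c) (c + 1) := by
        unfold State.arrowBlack; rw [hp c, T.bvert_col]
      rw [ha] at hcontra
      have h2 : (c : Fin 3) + 1 = c := badj_distinct s b₁ 1 hp (eq_badj_of_wadj_eq hcontra)
      exact absurd h2 (fin3_add_one_ne c)
    by_cases hc' : ∃ c, w = T.badj b₂ c
    · obtain ⟨c, rfl⟩ := hc'
      have ha : State.arrowBlack s (T.badj b₂ c) = T.wadj (T.badj b₂ c) (c + 1) := by
        unfold State.arrowBlack; rw [hs.1.2 c, T.bvert_col]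
      rw [ha] at hcontra
      exact hd (c + 1) c (eq_badj_of_wadj_eq hcontra)
    · push_neg at hc; push_neg at hc'
      have hv : s.toFun w = u.toFun w := by
        rw [← hs.2.2 w (fun c => hc' c), ← m₁.2.2 w (fun c => hc c)]
      have ha : State.arrowBlack s w = State.arrowBlack u w := by
        unfold State.arrowBlack; rw [hv]
      rw [ha] at hcontra
      exact hc₁.1 w (not_isOuter hT w) hcontra
  refine ⟨hcw, ?_, ?_⟩
  · intro c
    rw [← m₂.2.2 _ (fun c' => hd c c'), hc₁.2 c]
  · intro w hw
    by_cases hc : ∃ c, w = T.badj b₂ c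
    · obtain ⟨c, rfl⟩ := hc
      rw [m₂.1.2 c, hs.1.2 c]
    · push_neg at hc
      rw [← m₂.2.2 w (fun c => hc c), m₁.2.2 w hw, hs.2.2 w (fun c => hc c)]

lemma Walk.append' {s t u : T.State} {l l' : List (T.Black × Bool)}
    (h : T.Walk s l t) (h' : T.Walk t l' u) : T.Walk s (l ++ l') u := by
  induction h with
  | nil => exact h'
  | cw m _ ih => exact Walk.cw m (ih h')
  | ccw m _ ih => exact Walk.ccw m (ih h')

lemma cwwalk_nil (s : T.State) : T.CWWalk s [] s := Walk.nil s

lemma cwwalk_cons {s t u : T.State} {b : T.Black} {l : List T.Black}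
    (m : T.CWMoveAt s t b) (h : T.CWWalk t l u) : T.CWWalk s (b :: l) u :=
  Walk.cw m h

lemma cwwalk_append {s t u : T.State} {l l' : List T.Black}
    (h : T.CWWalk s l t) (h' : T.CWWalk t l' u) : T.CWWalk s (l ++ l') u := by
  unfold CWWalk at *
  rw [List.map_append]
  exact Walk.append' h h'

lemma cwwalk_nil_inv {s t : T.State} (h : T.CWWalk s [] t) : s = t := by
  unfold CWWalk at h
  cases h
  rfl

lemma cwwalk_cons_inv {s t : T.State} {b : T.Black} {l : List T.Black}
    (h : T.CWWalk s (b :: l) t) : ∃ s₁, T.CWMoveAt s s₁ b ∧ T.CWWalk s₁ l t := by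
  unfold CWWalk at h
  rw [List.map_cons] at h
  cases h with
  | cw m hw => exact ⟨_, m, hw⟩

lemma pushA (hT : T.outer = none) :
    ∀ (l : List T.Black) (s s' t : T.State) (b : T.Black),
      T.CWWalk s l s' → T.CWMoveAt s t b →
      (∃ l₁ l₂, l = l₁ ++ b :: l₂ ∧ T.CWWalk t (l₁ ++ l₂) s') ∨
        (∃ t', T.CWWalk t l t' ∧ T.CWMoveAt s' t' b) := by
  intro l
  induction l with
  | nil =>
    intro s s' t b hw hm
    have := cwwalk_nil_inv hw
    subst this
    exact Or.inr ⟨t, cwwalk_nil t, hm⟩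
  | cons b₀ lr ih =>
    intro s s' t b hw hm
    obtain ⟨s₁, m₀, hw₁⟩ := cwwalk_cons_inv hw
    by_cases hb : b = b₀
    · subst hb
      have : t = s₁ := move_det hm m₀
      subst this
      exact Or.inl ⟨[], lr, rfl, hw₁⟩
    · obtain ⟨u, hu₁, hu₂⟩ := diamond_fwd hT hm m₀ hb
      rcases ih s₁ s' u b hw₁ hu₂ with ⟨l₁, l₂, heq, hwu⟩ | ⟨t', hwt', hm'⟩
      · exact Or.inl ⟨b₀ :: l₁, l₂, by rw [heq]; rfl, cwwalk_cons hu₁ hwu⟩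
      · exact Or.inr ⟨t', cwwalk_cons hu₁ hwt', hm'⟩

lemma pushB (hT : T.outer = none) :
    ∀ (l : List T.Black) (s s' t : T.State) (b : T.Black),
      T.CWWalk s l s' → T.CWMoveAt t s' b →
      (∃ l₁ l₂, l = l₁ ++ b :: l₂ ∧ T.CWWalk s (l₁ ++ l₂) t) ∨
        (∃ t', T.CWWalk t' l t ∧ T.CWMoveAt t' s b) := by
  intro l
  induction l with
  | nil =>
    intro s s' t b hw hm
    have := cwwalk_nil_inv hw
    subst this
    exact Or.inr ⟨t, cwwalk_nil t, hm⟩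
  | cons b₀ lr ih =>
    intro s s' t b hw hm
    obtain ⟨s₁, m₀, hw₁⟩ := cwwalk_cons_inv hw
    rcases ih s₁ s' t b hw₁ hm with ⟨l₁, l₂, heq, hw₂⟩ | ⟨t', hwt', hm'⟩
    · exact Or.inl ⟨b₀ :: l₁, l₂, by rw [heq]; rfl, cwwalk_cons m₀ hw₂⟩
    · by_cases hb : b = b₀
      · subst hb
        have : t' = s := move_det_rev hm' m₀
        subst this
        exact Or.inl ⟨[], lr, rfl, hwt'⟩
      · obtain ⟨p, hp₁, hp₂⟩ := diamond_bwd hT hm' m₀ hb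
        exact Or.inr ⟨p, cwwalk_cons hp₁ hwt', hp₂⟩

lemma rec_fwd (hT : T.outer = none) {s t : T.State} {b : T.Black}
    (hr : T.Recurrent s) (m : T.CWMoveAt s t b) : T.Recurrent t := by
  obtain ⟨l, hl, hw⟩ := hr
  rcases pushA hT l s s t b hw m with ⟨l₁, l₂, heq, hw'⟩ | ⟨t', hw', hm'⟩
  · refine ⟨l₁ ++ l₂ ++ [b], by simp, ?_⟩
    exact cwwalk_append hw' (cwwalk_cons m (cwwalk_nil t))
  · have : t' = t := move_det hm' m
    subst this
    exact ⟨l, hl, hw'⟩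

lemma rec_bwd (hT : T.outer = none) {s t : T.State} {b : T.Black}
    (hr : T.Recurrent s) (m : T.CWMoveAt t s b) : T.Recurrent t := by
  obtain ⟨l, hl, hw⟩ := hr
  rcases pushB hT l s s t b hw m with ⟨l₁, l₂, heq, hw'⟩ | ⟨t', hw', hm'⟩
  · exact ⟨b :: (l₁ ++ l₂), by simp, cwwalk_cons m hw'⟩
  · have : t' = t := move_det_rev hm' m
    subst this
    exact ⟨l, hl, hw'⟩

lemma rec_walk (hT : T.outer = none) {l : List (T.Black × Bool)} {s t : T.State}
    (hw : T.Walk s l t) (hr : T.Recurrent s) : T.Recurrent t := by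
  induction hw with
  | nil => exact hr
  | cw m _ ih => exact ih (rec_fwd hT hr m)
  | ccw m _ ih => exact ih (rec_bwd hT hr m)

lemma rec_out {s : T.State} (hr : T.Recurrent s) :
    ∃ t b, T.CWMoveAt s t b := by
  obtain ⟨l, hl, hw⟩ := hr
  cases l with
  | nil => exact absurd rfl hl
  | cons b l' =>
    obtain ⟨t, m, -⟩ := cwwalk_cons_inv hw
    exact ⟨t, b, m⟩

lemma cwwalk_last : ∀ (l : List T.Black) (s s' : T.State),
    T.CWWalk s l s' → l ≠ [] → ∃ t b, T.CWMoveAt t s' b := by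
  intro l
  induction l with
  | nil => intro s s' _ h; exact absurd rfl h
  | cons b lr ih =>
    intro s s' hw _
    obtain ⟨s₁, m, hw₁⟩ := cwwalk_cons_inv hw
    cases lr with
    | nil =>
      have := cwwalk_nil_inv hw₁
      subst this
      exact ⟨s, b, m⟩
    | cons b' lr' => exact ih s₁ s' hw₁ (by simp)

lemma rec_in {s : T.State} (hr : T.Recurrent s) :
    ∃ t b, T.CWMoveAt t s b := by
  obtain ⟨l, hl, hw⟩ := hr
  exact cwwalk_last l s s hw hl

end Trinity
/-- Proposition 6.5 and its corollary.  In a cyclic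
connected component of the state transition graph of a toric trinity, every
state is recurrent: there is a non-empty sequence of clockwise moves starting
and ending with it.  Consequently, cyclic components contain no local maxima
(every state admits a clockwise move) and no local minima (every state admits a
counter-clockwise move). -/
theorem cyclic_component_all_states_recurrent
    (T : Trinity) (ht : T.Toric) (s₀ : T.State) (hrec : T.Recurrent s₀)
    (s : T.State) (hs : T.Reaches s₀ s) :
    T.Recurrent s ∧ (∃ (t : T.State) (b : T.Black), T.CWMoveAt s t b) ∧
      ∃ (t : T.State) (b : T.Black), T.CWMoveAt t s b := by
  obtain ⟨l, hw⟩ := hs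
  have hT : T.outer = none := ht.2.1
  have hr : T.Recurrent s := Trinity.rec_walk hT hw hrec
  exact ⟨hr, Trinity.rec_out hr, Trinity.rec_in hr⟩
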